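/- Let σ > 0 and τ ≥ max(log 3, σ + (1/3)·log 3), and suppose r, s ≥ τ. Let A = {z : d·e^{-r} < |z - o₁| < d·e^r} and B = {z : c·e^{-s} < |z - o₂| < c·e^s} be annuli in a domain Ω with centers in ℂ \ Ω. Suppose there are points a, b with |a - o₁| ≤ d·e^{-(r-σ)}, |b - o₁| ≥ d·e^{r-σ}, |b - o₂| ≤ c·e^{-(s-σ)}, and |a - o₂| ≥ c·e^{s-σ}. Then the (log 2)-cores of A and B are disjoint: {z : d·e^{-(r-log 2)} < |z - o₁| < d·e^{r-log 2}} ∩ {z : c·e^{-(s-log 2)} < |z - o₂| < c·e^{s-log 2}} = ∅. -/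

import Mathlib

lemma specs_aux (d c u v w : ℝ) (hd : 0 < d) (hc : 0 < c) (hw : 1 ≤ w)
    (hu : 3 ≤ u) (hv : 3 ≤ v) (h3u : 3 * w ^ 3 ≤ u ^ 3) (h3v : 3 * w ^ 3 ≤ v ^ 3)
    (hi : c * (v * u) ≤ d * w ^ 2 + d * w)
    (hii : d * (u ^ 2 * v) ≤ c * (w ^ 2 * u) + d * (v * w)) : False := by
  have hw0 : (0:ℝ) < w := lt_of_lt_of_le one_pos hw
  have hu0 : (0:ℝ) < u := by linarith
  have hv0 : (0:ℝ) < v := by linarith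
  have hww : w ≤ w ^ 2 := by nlinarith
  have hcuv : c * (v * u) ≤ 2 * d * w ^ 2 := by
    nlinarith [mul_le_mul_of_nonneg_left hww hd.le]
  have hP : u ^ 2 * v ^ 2 ≤ 2 * w ^ 4 + w * v ^ 2 := by
    have h1 : d * (u ^ 2 * v) * v ≤ (c * (w ^ 2 * u) + d * (v * w)) * v :=
      mul_le_mul_of_nonneg_right hii hv0.le
    nlinarith [mul_le_mul_of_nonneg_right hcuv (mul_pos hw0 hw0).le]
  have hwu : w ≤ u := by nlinarith [sq_nonneg (u - w), sq_nonneg (u + w)]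
  have h3w : 3 * w ≤ u ^ 2 := by nlinarith
  have hA : u ^ 2 * v ^ 2 ≤ 3 * w ^ 4 := by
    nlinarith [mul_le_mul_of_nonneg_right h3w (sq_nonneg v)]
  have h6 : 9 * w ^ 6 ≤ u ^ 6 := by nlinarith [sq_nonneg w, pow_pos hw0 3]
  have h6' : 9 * w ^ 6 ≤ v ^ 6 := by nlinarith [pow_pos hw0 3]
  have h12 : 81 * w ^ 12 ≤ u ^ 6 * v ^ 6 := by nlinarith [pow_pos hw0 6, pow_pos hu0 6]
  have hcube : u ^ 6 * v ^ 6 ≤ 27 * w ^ 12 := by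
    nlinarith [pow_le_pow_left₀ (by positivity : (0:ℝ) ≤ u ^ 2 * v ^ 2) hA 3]
  nlinarith [pow_pos hw0 12]

/-- "Spectacles configuration" forces disjoint cores: if `a` is inside the `σ`-core of `A`
and outside the `σ`-core of `B`, while `b` is outside the `σ`-core of `A` and inside the
`σ`-core of `B`, then the `(log 2)`-cores of `A` and `B` are disjoint. -/
theorem cores_disjoint_spectacles
    (Ω : Set ℂ) (hΩo : IsOpen Ω) (hΩc : IsConnected Ω)
    (o₁ o₂ : ℂ) (d c r s σ τ : ℝ) (hd : 0 < d) (hc : 0 < c)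
    (hσ : 0 < σ) (hτ1 : Real.log 3 ≤ τ) (hτ2 : σ + Real.log 3 / 3 ≤ τ)
    (hr : τ ≤ r) (hs : τ ≤ s)
    (ho₁ : o₁ ∉ Ω) (ho₂ : o₂ ∉ Ω)
    (hA : ∀ z : ℂ, d * Real.exp (-r) < ‖z - o₁‖ →
      ‖z - o₁‖ < d * Real.exp r → z ∈ Ω)
    (hB : ∀ z : ℂ, c * Real.exp (-s) < ‖z - o₂‖ →
      ‖z - o₂‖ < c * Real.exp s → z ∈ Ω)
    (a b : ℂ)
    (ha_in : ‖a - o₁‖ ≤ d * Real.exp (-(r - σ)))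
    (hb_out : d * Real.exp (r - σ) ≤ ‖b - o₁‖)
    (hb_in : ‖b - o₂‖ ≤ c * Real.exp (-(s - σ)))
    (ha_out : c * Real.exp (s - σ) ≤ ‖a - o₂‖) :
    {z : ℂ | d * Real.exp (-(r - Real.log 2)) < ‖z - o₁‖ ∧
        ‖z - o₁‖ < d * Real.exp (r - Real.log 2)} ∩
      {z : ℂ | c * Real.exp (-(s - Real.log 2)) < ‖z - o₂‖ ∧
        ‖z - o₂‖ < c * Real.exp (s - Real.log 2)} = ∅ := by
  have e2 : Real.exp (Real.log 2) = 2 := Real.exp_log (by norm_num)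
  have e3 : Real.exp (Real.log 3) = 3 := Real.exp_log (by norm_num)
  have hu0 : (0:ℝ) < Real.exp r := Real.exp_pos r
  have hv0 : (0:ℝ) < Real.exp s := Real.exp_pos s
  have hw0 : (0:ℝ) < Real.exp σ := Real.exp_pos σ
  have hu0' : Real.exp r ≠ 0 := hu0.ne'
  have hv0' : Real.exp s ≠ 0 := hv0.ne'
  have hw0' : Real.exp σ ≠ 0 := hw0.ne'
  have hw1 : 1 ≤ Real.exp σ := Real.one_le_exp hσ.le
  have hu3 : 3 ≤ Real.exp r := by rw [← e3]; exact Real.exp_le_exp.2 (le_trans hτ1 hr)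
  have hv3 : 3 ≤ Real.exp s := by rw [← e3]; exact Real.exp_le_exp.2 (le_trans hτ1 hs)
  have cube : ∀ x : ℝ, Real.exp (3 * x) = Real.exp x ^ 3 := by
    intro x
    rw [show (3:ℝ) * x = x + (x + x) by ring, Real.exp_add, Real.exp_add]; ring
  have h3u : 3 * Real.exp σ ^ 3 ≤ Real.exp r ^ 3 := by
    have h := Real.exp_le_exp.2 (show 3 * σ + Real.log 3 ≤ 3 * r by linarith)
    rw [Real.exp_add, e3, cube, cube] at h
    linarith
  have h3v : 3 * Real.exp σ ^ 3 ≤ Real.exp s ^ 3 := by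
    have h := Real.exp_le_exp.2 (show 3 * σ + Real.log 3 ≤ 3 * s by linarith)
    rw [Real.exp_add, e3, cube, cube] at h
    linarith
  -- distance between centers
  have tD : ‖o₁ - o₂‖ = ‖o₂ - o₁‖ := norm_sub_rev o₁ o₂
  have ta : ‖a - o₂‖ ≤ ‖a - o₁‖ + ‖o₂ - o₁‖ := by
    have h := norm_sub_le_norm_sub_add_norm_sub a o₁ o₂
    rw [tD] at h; exact h
  have tb : ‖b - o₁‖ ≤ ‖b - o₂‖ + ‖o₂ - o₁‖ := by
    have h := norm_sub_le_norm_sub_add_norm_sub b o₂ o₁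
    exact h
  have h1 : ‖o₂ - o₁‖ ≤ d * Real.exp (-r) ∨
      d * Real.exp r ≤ ‖o₂ - o₁‖ := by
    by_contra h
    push_neg at h
    exact ho₂ (hA o₂ h.1 h.2)
  have h2 : ‖o₂ - o₁‖ ≤ c * Real.exp (-s) ∨
      c * Real.exp s ≤ ‖o₂ - o₁‖ := by
    by_contra h
    push_neg at h
    rw [← tD] at h
    exact ho₁ (hB o₁ h.1 h.2)
  -- rewrite exp of differences as quotients
  have q1 : Real.exp (-(r - σ)) = Real.exp σ / Real.exp r := by
    rw [neg_sub, Real.exp_sub]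
  have q2 : Real.exp (s - σ) = Real.exp s / Real.exp σ := Real.exp_sub s σ
  have q3 : Real.exp (-(s - σ)) = Real.exp σ / Real.exp s := by
    rw [neg_sub, Real.exp_sub]
  have q4 : Real.exp (r - σ) = Real.exp r / Real.exp σ := Real.exp_sub r σ
  have q5 : Real.exp (-r) = 1 / Real.exp r := by rw [Real.exp_neg, one_div]
  have q6 : Real.exp (-s) = 1 / Real.exp s := by rw [Real.exp_neg, one_div]
  rcases h1 with h1 | h1
  · -- impossible: o₂ inside the hole of A
    exfalso
    have i1 : c * (Real.exp s / Real.exp σ) ≤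
        d * (Real.exp σ / Real.exp r) + d * (1 / Real.exp r) := by
      rw [← q1, ← q2, ← q5]; linarith [ta, ha_out, ha_in, h1]
    have i2 : d * (Real.exp r / Real.exp σ) ≤
        c * (Real.exp σ / Real.exp s) + d * (1 / Real.exp r) := by
      rw [← q3, ← q4, ← q5]; linarith [tb, hb_out, hb_in, h1]
    have hi : c * (Real.exp s * Real.exp r) ≤ d * Real.exp σ ^ 2 + d * Real.exp σ := by
      have h := mul_le_mul_of_nonneg_right i1 (mul_pos hw0 hu0).le
      have eL : c * (Real.exp s / Real.exp σ) * (Real.exp σ * Real.exp r)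
          = c * (Real.exp s * Real.exp r) := by field_simp
      have eR : (d * (Real.exp σ / Real.exp r) + d * (1 / Real.exp r)) * (Real.exp σ * Real.exp r)
          = d * Real.exp σ ^ 2 + d * Real.exp σ := by field_simp
      rw [eL, eR] at h; exact h
    have hii : d * (Real.exp r ^ 2 * Real.exp s) ≤
        c * (Real.exp σ ^ 2 * Real.exp r) + d * (Real.exp s * Real.exp σ) := by
      have h := mul_le_mul_of_nonneg_right i2 (mul_pos hw0 (mul_pos hu0 hv0)).le
      have eL : d * (Real.exp r / Real.exp σ) * (Real.exp σ * (Real.exp r * Real.exp s))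
          = d * (Real.exp r ^ 2 * Real.exp s) := by field_simp
      have eR : (c * (Real.exp σ / Real.exp s) + d * (1 / Real.exp r)) * (Real.exp σ * (Real.exp r * Real.exp s))
          = c * (Real.exp σ ^ 2 * Real.exp r) + d * (Real.exp s * Real.exp σ) := by field_simp
      rw [eL, eR] at h; exact h
    exact specs_aux d c (Real.exp r) (Real.exp s) (Real.exp σ) hd hc hw1 hu3 hv3 h3u h3v hi hii
  rcases h2 with h2 | h2
  · -- impossible: o₁ inside the hole of B
    exfalso
    have i1 : d * (Real.exp r / Real.exp σ) ≤
        c * (Real.exp σ / Real.exp s) + c * (1 / Real.exp s) := by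
      rw [← q3, ← q4, ← q6]; linarith [tb, hb_out, hb_in, h2]
    have i2 : c * (Real.exp s / Real.exp σ) ≤
        d * (Real.exp σ / Real.exp r) + c * (1 / Real.exp s) := by
      rw [← q1, ← q2, ← q6]; linarith [ta, ha_out, ha_in, h2]
    have hi : d * (Real.exp r * Real.exp s) ≤ c * Real.exp σ ^ 2 + c * Real.exp σ := by
      have h := mul_le_mul_of_nonneg_right i1 (mul_pos hw0 hv0).le
      have eL : d * (Real.exp r / Real.exp σ) * (Real.exp σ * Real.exp s)
          = d * (Real.exp r * Real.exp s) := by field_simp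
      have eR : (c * (Real.exp σ / Real.exp s) + c * (1 / Real.exp s)) * (Real.exp σ * Real.exp s)
          = c * Real.exp σ ^ 2 + c * Real.exp σ := by field_simp
      rw [eL, eR] at h; exact h
    have hii : c * (Real.exp s ^ 2 * Real.exp r) ≤
        d * (Real.exp σ ^ 2 * Real.exp s) + c * (Real.exp r * Real.exp σ) := by
      have h := mul_le_mul_of_nonneg_right i2 (mul_pos hw0 (mul_pos hv0 hu0)).le
      have eL : c * (Real.exp s / Real.exp σ) * (Real.exp σ * (Real.exp s * Real.exp r))
          = c * (Real.exp s ^ 2 * Real.exp r) := by field_simp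
      have eR : (d * (Real.exp σ / Real.exp r) + c * (1 / Real.exp s)) * (Real.exp σ * (Real.exp s * Real.exp r))
          = d * (Real.exp σ ^ 2 * Real.exp s) + c * (Real.exp r * Real.exp σ) := by field_simp
      rw [eL, eR] at h; exact h
    exact specs_aux c d (Real.exp s) (Real.exp r) (Real.exp σ) hc hd hw1 hv3 hu3 h3v h3u hi hii
  · -- the centers are far apart: cores disjoint
    ext z
    simp only [Set.mem_inter_iff, Set.mem_setOf_eq, Set.mem_empty_iff_false, iff_false,
      not_and, and_imp]
    intro _ hz1 _ hz2
    exfalso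
    have tz : ‖o₂ - o₁‖ ≤ ‖z - o₁‖ + ‖z - o₂‖ := by
      have h := norm_sub_le_norm_sub_add_norm_sub o₂ z o₁
      rw [norm_sub_rev o₂ z] at h
      linarith
    rw [Real.exp_sub, e2] at hz1
    rw [Real.exp_sub, e2] at hz2
    have hz1' : ‖z - o₁‖ < d * Real.exp r / 2 := by
      rw [mul_div_assoc]; exact hz1
    have hz2' : ‖z - o₂‖ < c * Real.exp s / 2 := by
      rw [mul_div_assoc]; exact hz2
    linarith
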